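/- Conversely, let φ be a discounted MDP with unique optimal policy π* and let s, a ≠ π*(s). If ψ is an MDP such that Q^{π*}_ψ(s,a) > V^{π*}_ψ(s), then π* is not an optimal policy of ψ. Hence Alt(φ) = ⋃_{s, a≠π*(s)} {ψ : Q^{π*}_ψ(s,a) > V^{π*}_ψ(s)}, where Alt(φ) is the set of MDPs whose set of optimal policies does not contain π*. -/

import Mathlib

open Finset Real

/-- conversely, if `Q^{π*}_ψ(s,a) > V^{π*}_ψ(s)` for some state `s` and some
action `a ≠ π*(s)`, then `π*` is not an optimal policy of `ψ`: some deterministic policy has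
a value function that strictly exceeds `V^{π*}_ψ` at some state. -/
theorem pistar_not_optimal_of_Q_gt_V {S A : Type*}
    [Fintype S] [Fintype A] [Nonempty S] [Nonempty A] [DecidableEq S]
    (γ : ℝ) (hγ0 : 0 ≤ γ) (hγ1 : γ < 1)
    (rψ : S → A → ℝ)
    (pψ : S → A → S → ℝ) (hp0 : ∀ s a s', 0 ≤ pψ s a s') (hp1 : ∀ s a, ∑ s', pψ s a s' = 1)
    (πstar : S → A)
    (Vψ : S → ℝ) (Qψ : S → A → ℝ)
    (hVψ : ∀ s, Vψ s = rψ s (πstar s) + γ * ∑ s', pψ s (πstar s) s' * Vψ s')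
    (hQψ : ∀ s a, Qψ s a = rψ s a + γ * ∑ s', pψ s a s' * Vψ s')
    (s : S) (a : A) (ha : a ≠ πstar s)
    (hgt : Qψ s a > Vψ s) :
    ∃ (π' : S → A) (V' : S → ℝ),
      (∀ s', V' s' = rψ s' (π' s') + γ * ∑ s'', pψ s' (π' s') s'' * V' s'')
      ∧ ∃ s', Vψ s' < V' s' := by
  classical
  set π₁ : S → A := Function.update πstar s a with hπ₁
  set T : (S → ℝ) → (S → ℝ) :=
    fun V t => rψ t (π₁ t) + γ * ∑ s'', pψ t (π₁ t) s'' * V s'' with hT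
  have hK1 : (⟨γ, hγ0⟩ : NNReal) < 1 := by
    exact (NNReal.coe_lt_coe (r₁ := ⟨γ, hγ0⟩) (r₂ := 1)).mp (by exact_mod_cast hγ1)
  have hlip : LipschitzWith ⟨γ, hγ0⟩ T := by
    apply LipschitzWith.of_dist_le_mul
    intro V W
    have hd0 : 0 ≤ dist V W := dist_nonneg
    rw [dist_pi_le_iff (by positivity)]
    intro t
    rw [Real.dist_eq]
    have heq : T V t - T W t = γ * ∑ s'', pψ t (π₁ t) s'' * (V s'' - W s'') := by
      simp only [hT, mul_sub, Finset.sum_sub_distrib]; ring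
    rw [heq, abs_mul, abs_of_nonneg hγ0]
    have hb : |∑ s'', pψ t (π₁ t) s'' * (V s'' - W s'')| ≤ dist V W := by
      calc |∑ s'', pψ t (π₁ t) s'' * (V s'' - W s'')|
          ≤ ∑ s'', |pψ t (π₁ t) s'' * (V s'' - W s'')| := Finset.abs_sum_le_sum_abs _ _
        _ ≤ ∑ s'', pψ t (π₁ t) s'' * dist V W := by
            apply Finset.sum_le_sum
            intro i _
            rw [abs_mul, abs_of_nonneg (hp0 _ _ _)]
            exact mul_le_mul_of_nonneg_left
              (by rw [← Real.dist_eq]; exact dist_le_pi_dist V W i) (hp0 _ _ _)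
        _ = dist V W := by rw [← Finset.sum_mul, hp1, one_mul]
    exact mul_le_mul_of_nonneg_left hb hγ0
  have hc : ContractingWith ⟨γ, hγ0⟩ T := ⟨hK1, hlip⟩
  set V' : S → ℝ := ContractingWith.fixedPoint T hc with hV'
  have hfix : T V' = V' := hc.fixedPoint_isFixedPt
  -- monotonicity of T
  have hmono : ∀ V W : S → ℝ, (∀ t, V t ≤ W t) → ∀ t, T V t ≤ T W t := by
    intro V W h t
    simp only [hT]
    gcongr with i _
    · exact hp0 _ _ _
    · exact h i
  -- T Vψ ≥ Vψ pointwise, strict at s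
  have hTs : T Vψ s = Qψ s a := by
    simp only [hT, hπ₁, Function.update_self, hQψ]
  have hTt : ∀ t, t ≠ s → T Vψ t = Vψ t := by
    intro t ht
    simp only [hT, hπ₁, Function.update_of_ne ht]
    exact (hVψ t).symm
  have hstep : ∀ t, Vψ t ≤ T Vψ t := by
    intro t
    by_cases ht : t = s
    · subst ht; rw [hTs]; exact le_of_lt hgt
    · rw [hTt t ht]
  -- iterates are monotone
  have hiter : ∀ n, ∀ t, T^[n] Vψ t ≤ T^[n + 1] Vψ t := by
    intro n
    induction n with
    | zero => simpa using hstep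
    | succ k ih =>
        intro t
        rw [Function.iterate_succ_apply', Function.iterate_succ_apply']
        exact hmono _ _ ih t
  have hge1 : ∀ n, 1 ≤ n → ∀ t, T Vψ t ≤ T^[n] Vψ t := by
    intro n hn
    induction n with
    | zero => omega
    | succ k ih =>
        intro t
        rcases Nat.eq_or_lt_of_le hn with h | h
        · simp [← h]
        · exact le_trans (ih (by omega) t) (hiter k t)
  -- V' = lim T^[n] Vψ
  have htend : Filter.Tendsto (fun n => T^[n] Vψ) Filter.atTop (nhds V') :=
    hc.tendsto_iterate_fixedPoint Vψ
  have htends : Filter.Tendsto (fun n => T^[n] Vψ s) Filter.atTop (nhds (V' s)) :=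
    ((continuous_apply s).tendsto V').comp htend
  have hVges : T Vψ s ≤ V' s := by
    apply ge_of_tendsto htends
    filter_upwards [Filter.eventually_ge_atTop 1] with n hn
    exact hge1 n hn s
  refine ⟨π₁, V', ?_, s, ?_⟩
  · intro t
    have := congrFun hfix t
    simpa [hT] using this.symm
  · calc Vψ s < Qψ s a := hgt
      _ = T Vψ s := hTs.symm
      _ ≤ V' s := hVges
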